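/- For all a, b ≥ 2, the real vector space of linear maps T : ℝ^{a×b} → ℝ^{a×b} satisfying T((σ,τ)·W) = (σ,τ)·T(W) for all (σ,τ) ∈ S_a × S_b and W ∈ ℝ^{a×b} has dimension exactly 4. -/

import Mathlib

open Matrix

namespace WeightDim

variable (a b : ℕ)

/-- The action of `S_a × S_b` on `a × b` matrices:
`((σ, τ) · W) i j = W (σ⁻¹ i) (τ⁻¹ j)`. -/
def act (σ : Equiv.Perm (Fin a)) (τ : Equiv.Perm (Fin b))
    (W : Matrix (Fin a) (Fin b) ℝ) : Matrix (Fin a) (Fin b) ℝ :=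
  Matrix.of fun i j => W (σ⁻¹ i) (τ⁻¹ j)

theorem act_add (σ : Equiv.Perm (Fin a)) (τ : Equiv.Perm (Fin b))
    (X Y : Matrix (Fin a) (Fin b) ℝ) :
    act a b σ τ (X + Y) = act a b σ τ X + act a b σ τ Y := by
  ext i j; simp [act]

theorem act_smul (σ : Equiv.Perm (Fin a)) (τ : Equiv.Perm (Fin b)) (c : ℝ)
    (X : Matrix (Fin a) (Fin b) ℝ) :
    act a b σ τ (c • X) = c • act a b σ τ X := by
  ext i j; simp [act]

/-- The space of `S_a × S_b`-equivariant linear endomorphisms of `ℝ^{a×b}`. -/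
noncomputable def EquivariantMaps :
    Submodule ℝ (Matrix (Fin a) (Fin b) ℝ →ₗ[ℝ] Matrix (Fin a) (Fin b) ℝ) where
  carrier := {T | ∀ (σ : Equiv.Perm (Fin a)) (τ : Equiv.Perm (Fin b))
    (W : Matrix (Fin a) (Fin b) ℝ), T (act a b σ τ W) = act a b σ τ (T W)}
  zero_mem' := by
    intro σ τ W
    simp only [LinearMap.zero_apply]
    ext i j; simp [act]
  add_mem' := by
    intro T T' hT hT' σ τ W
    simp [LinearMap.add_apply, hT σ τ W, hT' σ τ W, act_add]
  smul_mem' := by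
    intro c T hT σ τ W
    simp [LinearMap.smul_apply, hT σ τ W, act_smul]

noncomputable def Bmap (p q : Bool) :
    Matrix (Fin a) (Fin b) ℝ →ₗ[ℝ] Matrix (Fin a) (Fin b) ℝ where
  toFun W := Matrix.of fun i j => ∑ k, ∑ l,
    if decide (k = i) = p ∧ decide (l = j) = q then W k l else 0
  map_add' X Y := by
    ext i j
    simp only [Matrix.add_apply, of_apply, ← Finset.sum_add_distrib]
    congr 1; ext k; congr 1; ext l
    split <;> simp
  map_smul' c X := by
    ext i j
    simp only [Matrix.smul_apply, of_apply, smul_eq_mul, RingHom.id_apply,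
      Finset.mul_sum]
    congr 1; ext k; congr 1; ext l
    split <;> simp

lemma Bmap_equivariant (p q : Bool) (σ : Equiv.Perm (Fin a)) (τ : Equiv.Perm (Fin b))
    (W : Matrix (Fin a) (Fin b) ℝ) :
    Bmap a b p q (act a b σ τ W) = act a b σ τ (Bmap a b p q W) := by
  ext i j
  simp only [Bmap, LinearMap.coe_mk, AddHom.coe_mk, act, of_apply]
  rw [← Equiv.sum_comp σ]
  congr 1; ext k
  rw [← Equiv.sum_comp τ]
  congr 1; ext l
  have h1 : (decide (σ k = i) = p) = (decide (k = σ⁻¹ i) = p) := by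
    congr 1; exact decide_eq_decide.mpr (by constructor <;> intro h <;> subst h <;> simp)
  have h2 : (decide (τ l = j) = q) = (decide (l = τ⁻¹ j) = q) := by
    congr 1; exact decide_eq_decide.mpr (by constructor <;> intro h <;> subst h <;> simp)
  simp [h1, h2]

lemma exists_perm {n : ℕ} (x y i k : Fin n) (hxy : x ≠ y) (hik : i ≠ k) :
    ∃ σ : Equiv.Perm (Fin n), σ x = i ∧ σ y = k := by
  refine ⟨Equiv.swap x i * Equiv.swap y (Equiv.swap x i k), ?_, ?_⟩
  · have hxk : x ≠ Equiv.swap x i k := by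
      intro h
      have := congrArg (Equiv.swap x i) h
      rw [Equiv.swap_apply_left, Equiv.swap_apply_self] at this
      exact hik this
    simp [Equiv.Perm.mul_apply, Equiv.swap_apply_of_ne_of_ne hxy hxk]
  · simp [Equiv.Perm.mul_apply, Equiv.swap_apply_left, Equiv.swap_apply_self]

lemma Bmap_std (p q : Bool) (k i : Fin a) (l j : Fin b) :
    Bmap a b p q (Matrix.single k l 1) i j =
      if decide (k = i) = p ∧ decide (l = j) = q then 1 else 0 := by
  simp only [Bmap, LinearMap.coe_mk, AddHom.coe_mk, of_apply]
  rw [Fintype.sum_eq_single k, Fintype.sum_eq_single l]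
  · simp
  · intro x hx; simp [Matrix.single_apply_of_ne, hx.symm]
  · intro x hx
    rw [Fintype.sum_eq_single l]
    · simp [Matrix.single_apply_of_ne, hx.symm]
    · intro y hy; simp [Matrix.single_apply_of_ne, hy.symm]

theorem finrank_equivariantMaps_eq_four (ha : 2 ≤ a) (hb : 2 ≤ b) :
    Module.finrank ℝ (EquivariantMaps a b) = 4 := by
  have h0a : 0 < a := by omega
  have h1a : 1 < a := by omega
  have h0b : 0 < b := by omega
  have h1b : 1 < b := by omega
  set i0 : Fin a := ⟨0, h0a⟩ with hi0
  set i1 : Fin a := ⟨1, h1a⟩ with hi1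
  set j0 : Fin b := ⟨0, h0b⟩ with hj0
  set j1 : Fin b := ⟨1, h1b⟩ with hj1
  have hi01 : i0 ≠ i1 := by simp [hi0, hi1, Fin.ext_iff]
  have hj01 : j0 ≠ j1 := by simp [hj0, hj1, Fin.ext_iff]
  set e₁ : Bool → Fin a := fun p => if p then i0 else i1 with he₁
  set e₂ : Bool → Fin b := fun q => if q then j0 else j1 with he₂
  set Bfam : Bool × Bool →
      (Matrix (Fin a) (Fin b) ℝ →ₗ[ℝ] Matrix (Fin a) (Fin b) ℝ) :=
    fun pq => Bmap a b pq.1 pq.2 with hBfam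
  -- linear independence
  have hde : ∀ p : Bool, decide (i0 = e₁ p) = p := by
    intro p; cases p <;> simp [he₁, hi01]
  have hdf : ∀ q : Bool, decide (j0 = e₂ q) = q := by
    intro q; cases q <;> simp [he₂, hj01]
  have hind : LinearIndependent ℝ Bfam := by
    rw [Fintype.linearIndependent_iff]
    intro g hg pq
    have h := congrArg
      (fun T : Matrix (Fin a) (Fin b) ℝ →ₗ[ℝ] Matrix (Fin a) (Fin b) ℝ =>
        T (Matrix.single i0 j0 1) (e₁ pq.1) (e₂ pq.2)) hg
    simp only [LinearMap.sum_apply, LinearMap.smul_apply, Matrix.sum_apply,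
      Matrix.smul_apply, smul_eq_mul, hBfam, Bmap_std, LinearMap.zero_apply,
      Matrix.zero_apply] at h
    rw [Fintype.sum_eq_single pq] at h
    · rw [if_pos ⟨hde pq.1, hdf pq.2⟩, mul_one] at h
      exact h
    · rintro ⟨p, q⟩ hpq
      rw [if_neg, mul_zero]
      rintro ⟨h1, h2⟩
      rw [hde pq.1] at h1; rw [hdf pq.2] at h2
      exact hpq (Prod.ext h1.symm h2.symm)
  -- span
  have hspan : Submodule.span ℝ (Set.range Bfam) = EquivariantMaps a b := by
    apply le_antisymm
    · rw [Submodule.span_le]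
      rintro _ ⟨pq, rfl⟩
      intro σ τ W
      exact Bmap_equivariant a b pq.1 pq.2 σ τ W
    · intro T hT
      have coeff : ∀ (σ : Equiv.Perm (Fin a)) (τ : Equiv.Perm (Fin b))
          (i k : Fin a) (j l : Fin b),
          T (Matrix.single (σ k) (τ l) 1) (σ i) (τ j)
            = T (Matrix.single k l 1) i j := by
        intro σ τ i k j l
        have hact : act a b σ τ (Matrix.single k l 1)
            = Matrix.single (σ k) (τ l) 1 := by
          ext i' j'
          simp [act, Matrix.single_apply, Equiv.Perm.eq_inv_iff_eq, Equiv.eq_symm_apply]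
        have h := hT σ τ (Matrix.single k l 1)
        rw [hact] at h
        have h2 := congrFun (congrFun h (σ i)) (τ j)
        simpa [act] using h2
      have key : ∀ (k i : Fin a) (l j : Fin b),
          T (Matrix.single k l 1) i j
            = T (Matrix.single (e₁ (decide (k = i))) (e₂ (decide (l = j))) 1) i0 j0 := by
        intro k i l j
        obtain ⟨σ, hσ0, hσ1⟩ :
            ∃ σ : Equiv.Perm (Fin a), σ i0 = i ∧ σ (e₁ (decide (k = i))) = k := by
          by_cases h : k = i
          · subst h
            exact ⟨Equiv.swap i0 k, Equiv.swap_apply_left _ _,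
              by simp [he₁, Equiv.swap_apply_left]⟩
          · obtain ⟨σ, h1, h2⟩ := exists_perm i0 i1 i k hi01 (fun hh => h hh.symm)
            exact ⟨σ, h1, by simp [he₁, h, h2]⟩
        obtain ⟨τ, hτ0, hτ1⟩ :
            ∃ τ : Equiv.Perm (Fin b), τ j0 = j ∧ τ (e₂ (decide (l = j))) = l := by
          by_cases h : l = j
          · subst h
            exact ⟨Equiv.swap j0 l, Equiv.swap_apply_left _ _,
              by simp [he₂, Equiv.swap_apply_left]⟩
          · obtain ⟨τ, h1, h2⟩ := exists_perm j0 j1 j l hj01 (fun hh => h hh.symm)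
            exact ⟨τ, h1, by simp [he₂, h, h2]⟩
        calc T (Matrix.single k l 1) i j
            = T (Matrix.single (σ (e₁ (decide (k = i)))) (τ (e₂ (decide (l = j)))) 1)
                (σ i0) (τ j0) := by rw [hσ0, hσ1, hτ0, hτ1]
          _ = _ := coeff σ τ i0 (e₁ (decide (k = i))) j0 (e₂ (decide (l = j)))
      have hTsum : T = ∑ pq : Bool × Bool,
          T (Matrix.single (e₁ pq.1) (e₂ pq.2) 1) i0 j0 • Bfam pq := by
        apply (Matrix.stdBasis ℝ (Fin a) (Fin b)).ext
        rintro ⟨k, l⟩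
        rw [Matrix.stdBasis_eq_single]
        ext i j
        rw [key k i l j]
        simp only [LinearMap.sum_apply, LinearMap.smul_apply, Matrix.sum_apply,
          Matrix.smul_apply, smul_eq_mul, hBfam, Bmap_std]
        rw [Fintype.sum_eq_single (decide (k = i), decide (l = j))]
        · rw [if_pos ⟨rfl, rfl⟩, mul_one]
        · rintro ⟨p, q⟩ hpq
          rw [if_neg, mul_zero]
          rintro ⟨h1, h2⟩
          exact hpq (Prod.ext h1.symm h2.symm)
      rw [hTsum]
      exact Submodule.sum_mem _ fun pq _ =>
        Submodule.smul_mem _ _ (Submodule.subset_span ⟨pq, rfl⟩)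
  rw [← hspan, finrank_span_eq_card hind]
  simp

end WeightDim
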